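/- Let F be a group and H a subgroup. Suppose that for every prime p, every finite group S admitting a normal p-subgroup with quotient abelian of exponent dividing p−1, and every homomorphism ψ: F → S, one has ψ(g) ∈ ψ(H). Then for every finite supersolvable group G and every homomorphism φ: F → G, one has φ(g) ∈ φ(H). In other words, the pro-supersolvable closure of H equals the intersection over all primes p of the pro-H_p closures of H. -/

import Mathlib

universe u

open scoped commutatorElement

def IsSupersolvable (G : Type*) [Group G] : Prop :=
  ∃ (n : ℕ) (c : Fin (n + 1) → Subgroup G),
    c 0 = ⊥ ∧ c (Fin.last n) = ⊤ ∧ (∀ i, (c i).Normal) ∧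
    ∀ i : Fin n, ∃ x : G, c i.succ = c i.castSucc ⊔ Subgroup.closure {x}

section AuxSS

set_option linter.unnecessarySimpa false

variable {G : Type u} [Group G]

private lemma conj_pow_nat (g b : G) (n : ℕ) : (g * b * g⁻¹) ^ n = g * b ^ n * g⁻¹ := by
  induction n with
  | zero => group
  | succ k ih => rw [pow_succ, ih, pow_succ]; group

private lemma conj_zpow_int (g b : G) (k : ℤ) : g * b ^ k * g⁻¹ = (g * b * g⁻¹) ^ k := by
  have h1 := map_zpow (MulAut.conj g) b k
  simpa [MulAut.conj_apply] using h1

private lemma ss_map {G' : Type u} [Group G'] (f : G →* G') (hf : Function.Surjective f)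
    (h : IsSupersolvable G) : IsSupersolvable G' := by
  obtain ⟨n, c, h0, hlast, hnorm, hstep⟩ := h
  refine ⟨n, fun i => (c i).map f, ?_, ?_, fun i => (hnorm i).map f hf, ?_⟩
  · show (c 0).map f = ⊥
    rw [h0]; exact Subgroup.map_bot f
  · show (c (Fin.last n)).map f = ⊤
    rw [hlast]; exact Subgroup.map_top_of_surjective f hf
  · intro i
    obtain ⟨x, hx⟩ := hstep i
    refine ⟨f x, ?_⟩
    show (c i.succ).map f = (c i.castSucc).map f ⊔ Subgroup.closure {f x}
    rw [hx, Subgroup.map_sup, MonoidHom.map_closure, Set.image_singleton]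

private lemma exists_prime_order_normal [Finite G] [Nontrivial G] (h : IsSupersolvable G) :
    ∃ (A : Subgroup G) (r : ℕ), r.Prime ∧ A.Normal ∧ Nat.card A = r := by
  obtain ⟨n, c, h0, hlast, hnorm, hstep⟩ := h
  have step : ∀ m : ℕ, ∀ hm : m < n + 1, c ⟨m, hm⟩ ≠ ⊥ →
      ∃ x : G, x ≠ 1 ∧ (Subgroup.zpowers x).Normal := by
    intro m
    induction m with
    | zero =>
      intro hm hne
      exact absurd h0 (by simpa using hne)
    | succ k ih =>
      intro hm hne
      by_cases hk : c ⟨k, by omega⟩ = ⊥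
      · have hkn : k < n := by omega
        obtain ⟨x, hx⟩ := hstep ⟨k, hkn⟩
        have hsucc : (⟨k + 1, hm⟩ : Fin (n + 1)) = (⟨k, hkn⟩ : Fin n).succ := rfl
        have hcast : ((⟨k, hkn⟩ : Fin n).castSucc : Fin (n + 1)) = ⟨k, by omega⟩ := rfl
        have hx2 : c ⟨k + 1, hm⟩ = Subgroup.zpowers x := by
          rw [hsucc, hx, hcast, hk, bot_sup_eq, Subgroup.zpowers_eq_closure]
        refine ⟨x, ?_, hx2 ▸ hnorm _⟩
        intro hx1
        rw [hx1, Subgroup.zpowers_one_eq_bot] at hx2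
        exact hne hx2
      · exact ih (by omega) hk
  have hlast' : c ⟨n, by omega⟩ ≠ ⊥ := by
    have h1 : (⟨n, by omega⟩ : Fin (n + 1)) = Fin.last n := rfl
    rw [h1, hlast]
    exact top_ne_bot
  obtain ⟨x, hx1, hxn⟩ := step n (by omega) hlast'
  have hox : orderOf x ≠ 0 := by
    intro h0'
    have h1 : orderOf x ∣ Nat.card G := orderOf_dvd_natCard x
    rw [h0'] at h1
    exact Nat.card_pos.ne' (Nat.eq_zero_of_zero_dvd h1)
  have hx2 : orderOf x ≠ 1 := by simpa [orderOf_eq_one_iff] using hx1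
  set m := orderOf x with hm
  set r := m.minFac with hrdef
  have hr : r.Prime := Nat.minFac_prime hx2
  set a : G := x ^ (m / r) with hadef
  have ha : orderOf a = r := orderOf_pow_orderOf_div hox (Nat.minFac_dvd m)
  refine ⟨Subgroup.zpowers a, r, hr, ?_, by rw [Nat.card_zpowers, ha]⟩
  constructor
  intro b hb g
  obtain ⟨t, ht⟩ := Subgroup.mem_zpowers_iff.mp hb
  obtain ⟨s, hs⟩ := Subgroup.mem_zpowers_iff.mp
    (hxn.conj_mem x (Subgroup.mem_zpowers x) g)
  have hconja : g * a * g⁻¹ = a ^ s := by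
    rw [hadef, ← conj_pow_nat, ← hs, ← zpow_natCast (x ^ s), ← zpow_mul,
      ← zpow_natCast x, ← zpow_mul, mul_comm]
  have hgb : g * b * g⁻¹ = a ^ (s * t) := by
    rw [← ht, conj_zpow_int, hconja, ← zpow_mul]
  rw [hgb]
  exact Subgroup.mem_zpowers_iff.mpr ⟨s * t, rfl⟩

private lemma centralizer_normal_of_normal {A : Subgroup G} (hA : A.Normal) :
    (Subgroup.centralizer (A : Set G)).Normal := by
  constructor
  intro c hc g
  rw [Subgroup.mem_centralizer_iff] at hc ⊢
  intro b hb
  have h1 : g⁻¹ * b * g ∈ A := by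
    have := hA.conj_mem b hb g⁻¹
    simpa using this
  have h2 := hc _ h1
  calc b * (g * c * g⁻¹) = g * ((g⁻¹ * b * g) * c) * g⁻¹ := by group
    _ = g * (c * (g⁻¹ * b * g)) * g⁻¹ := by rw [h2]
    _ = (g * c * g⁻¹) * b := by group

private lemma card_quotient_lt [Finite G] {T : Subgroup G} [T.Normal] (hT : T ≠ ⊥) :
    Nat.card (G ⧸ T) < Nat.card G := by
  have h1 := Subgroup.card_eq_card_quotient_mul_card_subgroup T
  have h2 : 1 < Nat.card T := by
    have := T.bot_or_nontrivial.resolve_left hT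
    exact Finite.one_lt_card_iff_nontrivial.mpr this
  have h3 : 0 < Nat.card (G ⧸ T) := Nat.card_pos
  rw [h1]
  exact (lt_mul_iff_one_lt_right h3).mpr h2

private lemma le_centralizer_self_of_prime_card [Finite G] {A : Subgroup G} {q : ℕ}
    (hq : q.Prime) (hc : Nat.card A = q) : A ≤ Subgroup.centralizer (A : Set G) := by
  haveI := Fact.mk hq
  haveI : IsCyclic A := isCyclic_of_prime_card hc
  letI : CommGroup A := IsCyclic.commGroup
  intro x hx
  rw [Subgroup.mem_centralizer_iff]
  intro y hy
  have h := mul_comm (⟨y, hy⟩ : A) (⟨x, hx⟩ : A)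
  exact congrArg Subtype.val h

private lemma aut_prime_centralizer [Finite G] {A : Subgroup G} (hA : A.Normal) {q : ℕ}
    (hq : q.Prime) (hcard : Nat.card A = q) :
    (∀ x y : G, ⁅x, y⁆ ∈ Subgroup.centralizer (A : Set G)) ∧
      (∀ x : G, x ^ (q - 1) ∈ Subgroup.centralizer (A : Set G)) := by
  haveI := Fact.mk hq
  haveI : Nontrivial A := Finite.one_lt_card_iff_nontrivial.mp (hcard ▸ hq.one_lt)
  obtain ⟨a0, ha0⟩ := exists_ne (1 : A)
  have horder : orderOf (a0 : G) = q := by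
    have h1 : orderOf a0 ∣ q := hcard ▸ orderOf_dvd_natCard a0
    have h2 := (hq.eq_one_or_self_of_dvd _ h1).resolve_left
      (by simpa [orderOf_eq_one_iff] using ha0)
    rw [Subgroup.orderOf_coe, h2]
  set a : G := (a0 : G) with hadef
  have haA : a ∈ A := a0.2
  have hane : a ≠ 1 := by
    intro h1
    rw [h1, orderOf_one] at horder
    exact hq.one_lt.ne horder
  have hz : Subgroup.zpowers a = A := by
    apply Subgroup.eq_of_le_of_card_ge (Subgroup.zpowers_le.mpr haA)
    rw [hcard, Nat.card_zpowers, horder]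
  have hgen : ∀ b ∈ A, ∃ k : ℕ, b = a ^ k := by
    intro b hb
    rw [← hz] at hb
    obtain ⟨t, ht⟩ := Subgroup.mem_zpowers_iff.mp hb
    refine ⟨(t % (q : ℤ)).toNat, ?_⟩
    have hq0 : (0 : ℤ) < (q : ℤ) := by exact_mod_cast hq.pos
    have h2 : (((t % (q : ℤ)).toNat : ℤ)) = t % (q : ℤ) :=
      Int.toNat_of_nonneg (Int.emod_nonneg t hq0.ne')
    rw [← ht, ← zpow_natCast a, h2, ← horder, zpow_mod_orderOf]
  have key1 : ∀ x : G, ∃ k : ℕ, ¬ q ∣ k ∧ x * a * x⁻¹ = a ^ k := by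
    intro x
    obtain ⟨k, hk⟩ := hgen _ (hA.conj_mem a haA x)
    refine ⟨k, ?_, hk⟩
    intro hdvd
    have h1 : a ^ k = 1 := by
      rw [← horder] at hdvd
      exact orderOf_dvd_iff_pow_eq_one.mp hdvd
    have h3 : a = 1 := by
      have h2 : x * a * x⁻¹ = 1 := by rw [hk, h1]
      have h4 := congrArg (fun z => x⁻¹ * z * x) h2
      simpa [mul_assoc] using h4
    exact hane h3
  have hconj : ∀ (z : G) (k j : ℕ), z * a * z⁻¹ = a ^ k → z * a ^ j * z⁻¹ = a ^ (k * j) := by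
    intro z k j hzk
    rw [← conj_pow_nat, hzk, ← pow_mul]
  have compose : ∀ (z1 z2 : G) (k1 k2 : ℕ), z1 * a * z1⁻¹ = a ^ k1 → z2 * a * z2⁻¹ = a ^ k2 →
      (z1 * z2) * a * (z1 * z2)⁻¹ = a ^ (k2 * k1) := by
    intro z1 z2 k1 k2 h1 h2
    have e1 : (z1 * z2) * a * (z1 * z2)⁻¹ = z1 * (z2 * a * z2⁻¹) * z1⁻¹ := by group
    rw [e1, h2, hconj z1 k1 k2 h1, mul_comm k1 k2]
  have eqmod : ∀ s t : ℕ, s ≡ t [MOD q] → a ^ s = a ^ t := by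
    intro s t hst
    rw [pow_eq_pow_iff_modEq, horder]
    exact hst
  have eqmod' : ∀ s t : ℕ, a ^ s = a ^ t → s ≡ t [MOD q] := by
    intro s t hst
    rw [pow_eq_pow_iff_modEq, horder] at hst
    exact hst
  have inv_rel : ∀ (x : G) (k k' : ℕ), x * a * x⁻¹ = a ^ k → x⁻¹ * a * x⁻¹⁻¹ = a ^ k' →
      ((k * k' : ℕ) : ZMod q) = ((1 : ℕ) : ZMod q) := by
    intro x k k' h1 h2
    have h3 := compose x⁻¹ x k' k h2 h1
    have h4 : (x⁻¹ * x) * a * (x⁻¹ * x)⁻¹ = a ^ (1 : ℕ) := by group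
    rw [h3] at h4
    have h5 := eqmod' _ _ h4
    rw [ZMod.natCast_eq_natCast_iff]
    exact h5
  have fixall : ∀ z : G, z * a * z⁻¹ = a → z ∈ Subgroup.centralizer (A : Set G) := by
    intro z hzfix
    rw [Subgroup.mem_centralizer_iff]
    intro b hb
    obtain ⟨j, hj⟩ := hgen b hb
    have h1 : z * b * z⁻¹ = b := by
      rw [hj, ← conj_pow_nat, hzfix]
    calc b * z = (z * b * z⁻¹) * z := by rw [h1]
      _ = z * b := by group
  constructor
  · intro x y
    obtain ⟨kx, hkxd, hkx⟩ := key1 x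
    obtain ⟨ky, hkyd, hky⟩ := key1 y
    obtain ⟨kx', _, hkx'⟩ := key1 x⁻¹
    obtain ⟨ky', _, hky'⟩ := key1 y⁻¹
    have hxrel := inv_rel x kx kx' hkx hkx'
    have hyrel := inv_rel y ky ky' hky hky'
    have hcomm : ⁅x, y⁆ * a * ⁅x, y⁆⁻¹ = a ^ (ky' * (kx' * (ky * kx))) := by
      have c1 := compose x y kx ky hkx hky
      have c2 := compose (x * y) x⁻¹ (ky * kx) kx' c1 hkx'
      have c3 := compose (x * y * x⁻¹) y⁻¹ (kx' * (ky * kx)) ky' c2 hky'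
      rw [commutatorElement_def]
      exact c3
    have hmod : ((ky' * (kx' * (ky * kx)) : ℕ) : ZMod q) = ((1 : ℕ) : ZMod q) := by
      push_cast at hxrel hyrel ⊢
      calc (ky' : ZMod q) * ((kx' : ZMod q) * ((ky : ZMod q) * (kx : ZMod q)))
          = ((kx : ZMod q) * (kx' : ZMod q)) * ((ky : ZMod q) * (ky' : ZMod q)) := by ring
        _ = 1 := by rw [hxrel, hyrel, mul_one]
    have h6 := eqmod _ _ ((ZMod.natCast_eq_natCast_iff _ _ _).mp hmod)
    rw [h6, pow_one] at hcomm
    exact fixall _ hcomm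
  · intro x
    obtain ⟨k, hkd, hk⟩ := key1 x
    have powrel : ∀ n : ℕ, x ^ n * a * (x ^ n)⁻¹ = a ^ (k ^ n) := by
      intro n
      induction n with
      | zero => simp
      | succ j ih =>
        have h7 := compose (x ^ j) x (k ^ j) k ih hk
        rw [← pow_succ x j] at h7
        rw [h7, pow_succ k j, mul_comm (k ^ j) k]
    have hferm : ((k ^ (q - 1) : ℕ) : ZMod q) = ((1 : ℕ) : ZMod q) := by
      push_cast
      apply ZMod.pow_card_sub_one_eq_one
      intro h0
      exact hkd ((ZMod.natCast_eq_zero_iff k q).mp h0)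
    have h8 := eqmod _ _ ((ZMod.natCast_eq_natCast_iff _ _ _).mp hferm)
    have h2 := powrel (q - 1)
    rw [h8, pow_one] at h2
    exact fixall _ h2

/-- Key structural lemma: every finite supersolvable group `G` has a normal `q'`-subgroup
`W` and a normal subgroup `P ⊇ W` such that `P/W` is a `q`-group and `G/P` is abelian of
exponent dividing `q - 1`. -/
private lemma lemU : ∀ (n : ℕ) (G : Type u) [Group G] [Finite G], Nat.card G ≤ n →
    ∀ q : ℕ, q.Prime → IsSupersolvable G →
    ∃ W P : Subgroup G, W.Normal ∧ P.Normal ∧ W ≤ P ∧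
      (∀ x ∈ W, ¬ q ∣ orderOf x) ∧ (∀ x ∈ P, ∃ m : ℕ, x ^ q ^ m ∈ W) ∧
      (∀ x y : G, ⁅x, y⁆ ∈ P) ∧ (∀ x : G, x ^ (q - 1) ∈ P) := by
  intro n
  induction n using Nat.strongRecOn with
  | ind n ih =>
  intro G _ _ hcard q hq hss
  rcases subsingleton_or_nontrivial G with hs | hs
  · refine ⟨⊥, ⊥, inferInstance, inferInstance, le_rfl, ?_, ?_, ?_, ?_⟩
    · intro x hx hd
      rw [Subgroup.mem_bot] at hx
      rw [hx, orderOf_one] at hd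
      exact hq.ne_one (Nat.dvd_one.mp hd)
    · intro x hx
      exact ⟨0, by rwa [pow_zero, pow_one]⟩
    · intro x y
      rw [Subgroup.mem_bot]
      exact Subsingleton.elim _ _
    · intro x
      rw [Subgroup.mem_bot]
      exact Subsingleton.elim _ _
  · obtain ⟨A, r, hr, hAn, hAc⟩ := exists_prime_order_normal hss
    haveI := hAn
    have hAbot : A ≠ ⊥ := by
      intro h1
      rw [h1, Subgroup.card_bot] at hAc
      exact hr.one_lt.ne' hAc.symm
    -- helper: recurse through the quotient by a nontrivial normal q'-subgroup
    have recurse : ∀ T : Subgroup G, T.Normal → T ≠ ⊥ → (∀ x ∈ T, ¬ q ∣ orderOf x) →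
        ∃ W P : Subgroup G, W.Normal ∧ P.Normal ∧ W ≤ P ∧
          (∀ x ∈ W, ¬ q ∣ orderOf x) ∧ (∀ x ∈ P, ∃ m : ℕ, x ^ q ^ m ∈ W) ∧
          (∀ x y : G, ⁅x, y⁆ ∈ P) ∧ (∀ x : G, x ^ (q - 1) ∈ P) := by
      intro T hTn hT hTq
      haveI := hTn
      have hlt : Nat.card (G ⧸ T) < Nat.card G := card_quotient_lt hT
      obtain ⟨W', P', hW'n, hP'n, hWP', hW'q, hP'W, hP'c, hP'p⟩ :=
        ih (Nat.card (G ⧸ T)) (lt_of_lt_of_le hlt hcard) (G ⧸ T) le_rfl q hq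
          (ss_map (QuotientGroup.mk' T) (QuotientGroup.mk'_surjective T) hss)
      set π := QuotientGroup.mk' T with hπ
      refine ⟨W'.comap π, P'.comap π, hW'n.comap π, hP'n.comap π, Subgroup.comap_mono hWP',
        ?_, ?_, ?_, ?_⟩
      · intro x hx
        have hx' : π x ∈ W' := hx
        have hd : ¬ q ∣ orderOf (π x) := hW'q _ hx'
        have hxd : x ^ orderOf (π x) ∈ T := by
          have h1 : π (x ^ orderOf (π x)) = 1 := by
            rw [map_pow]; exact pow_orderOf_eq_one _
          have h2 : x ^ orderOf (π x) ∈ π.ker := MonoidHom.mem_ker.mpr h1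
          rwa [hπ, QuotientGroup.ker_mk'] at h2
        have he : ¬ q ∣ orderOf (x ^ orderOf (π x)) := hTq _ hxd
        intro hcon
        have h2 : x ^ (orderOf (π x) * orderOf (x ^ orderOf (π x))) = 1 := by
          rw [pow_mul]; exact pow_orderOf_eq_one _
        have h3 : orderOf x ∣ orderOf (π x) * orderOf (x ^ orderOf (π x)) :=
          orderOf_dvd_of_pow_eq_one h2
        rcases hq.dvd_mul.mp (dvd_trans hcon h3) with h5 | h5
        exacts [hd h5, he h5]
      · intro x hx
        obtain ⟨m, hm⟩ := hP'W (π x) hx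
        exact ⟨m, by rwa [Subgroup.mem_comap, map_pow]⟩
      · intro x y
        have h1 := hP'c (π x) (π y)
        rwa [Subgroup.mem_comap, map_commutatorElement]
      · intro x
        have h1 := hP'p (π x)
        rwa [Subgroup.mem_comap, map_pow]
    rcases eq_or_ne r q with hrq | hrq
    · -- r = q : analyze the quotient by A
      rw [hrq] at hAc
      have hlt : Nat.card (G ⧸ A) < Nat.card G := card_quotient_lt hAbot
      obtain ⟨W', P', hW'n, hP'n, hWP', hW'q, hP'W, hP'c, hP'p⟩ :=
        ih (Nat.card (G ⧸ A)) (lt_of_lt_of_le hlt hcard) (G ⧸ A) le_rfl q hq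
          (ss_map (QuotientGroup.mk' A) (QuotientGroup.mk'_surjective A) hss)
      set π := QuotientGroup.mk' A with hπ
      set X := W'.comap π with hX
      set P := P'.comap π with hP
      have hXn : X.Normal := hW'n.comap π
      have hPn : P.Normal := hP'n.comap π
      have hAX : A ≤ X := by
        intro u hu
        have h1 : u ∈ π.ker := by rwa [hπ, QuotientGroup.ker_mk']
        show π u ∈ W'
        rw [MonoidHom.mem_ker.mp h1]
        exact W'.one_mem
      set Cen := Subgroup.centralizer (A : Set G) with hCen
      have hCenn : Cen.Normal := centralizer_normal_of_normal hAn
      set C := Cen ⊓ X with hC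
      have hCn : C.Normal := by
        constructor
        intro c hc g
        obtain ⟨hc1, hc2⟩ := Subgroup.mem_inf.mp hc
        exact Subgroup.mem_inf.mpr ⟨hCenn.conj_mem c hc1 g, hXn.conj_mem c hc2 g⟩
      have hAC : A ≤ C := le_inf (le_centralizer_self_of_prime_card hq hAc) hAX
      by_cases hCA : C ≤ A
      · -- direct construction : N := Cen ⊓ P is a normal q-subgroup with good quotient
        obtain ⟨hcomm, hpow⟩ := aut_prime_centralizer hAn hq hAc
        refine ⟨⊥, Cen ⊓ P, inferInstance, ?_, bot_le, ?_, ?_, ?_, ?_⟩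
        · constructor
          intro c hc g
          obtain ⟨hc1, hc2⟩ := Subgroup.mem_inf.mp hc
          exact Subgroup.mem_inf.mpr ⟨hCenn.conj_mem c hc1 g, hPn.conj_mem c hc2 g⟩
        · intro x hx hd
          rw [Subgroup.mem_bot] at hx
          rw [hx, orderOf_one] at hd
          exact hq.ne_one (Nat.dvd_one.mp hd)
        · intro x hx
          obtain ⟨hxc, hxp⟩ := Subgroup.mem_inf.mp hx
          obtain ⟨m, hm⟩ := hP'W (π x) hxp
          have h1 : x ^ q ^ m ∈ X := by
            rw [hX, Subgroup.mem_comap, map_pow]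
            exact hm
          have h2 : x ^ q ^ m ∈ Cen := Cen.pow_mem hxc _
          have h3 : x ^ q ^ m ∈ A := hCA (Subgroup.mem_inf.mpr ⟨h2, h1⟩)
          refine ⟨m + 1, ?_⟩
          rw [Subgroup.mem_bot, pow_succ, pow_mul]
          have h4 : (⟨x ^ q ^ m, h3⟩ : A) ^ Nat.card A = 1 := pow_card_eq_one'
          have h5 := congrArg Subtype.val h4
          rw [hAc] at h5
          simpa using h5
        · intro x y
          refine Subgroup.mem_inf.mpr ⟨hcomm x y, ?_⟩
          rw [hP, Subgroup.mem_comap, map_commutatorElement]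
          exact hP'c _ _
        · intro x
          refine Subgroup.mem_inf.mpr ⟨hpow x, ?_⟩
          rw [hP, Subgroup.mem_comap, map_pow]
          exact hP'p _
      · -- Schur–Zassenhaus: extract a nontrivial normal q'-subgroup T and recurse
        haveI : (A.subgroupOf C).Normal := hAn.subgroupOf C
        have hcardA' : Nat.card (A.subgroupOf C) = q := by
          rw [← hAc]
          exact Nat.card_congr (Subgroup.subgroupOfEquivOfLe hAC).toEquiv
        haveI := Fact.mk hq
        have hindex : ¬ q ∣ (A.subgroupOf C).index := by
          intro hdvd
          have hdvd' : q ∣ Nat.card (C ⧸ A.subgroupOf C) := by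
            rwa [← Subgroup.index_eq_card]
          obtain ⟨zbar, hz⟩ := exists_prime_orderOf_dvd_card' q hdvd'
          obtain ⟨z, rfl⟩ := QuotientGroup.mk_surjective zbar
          have hzX : (z : G) ∈ X := (Subgroup.mem_inf.mp z.2).2
          have hd : ¬ q ∣ orderOf (π (z : G)) := hW'q _ hzX
          have hzd : (z : G) ^ orderOf (π (z : G)) ∈ A := by
            have h1 : π ((z : G) ^ orderOf (π (z : G))) = 1 := by
              rw [map_pow]; exact pow_orderOf_eq_one _
            have h2 : (z : G) ^ orderOf (π (z : G)) ∈ π.ker := MonoidHom.mem_ker.mpr h1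
            rwa [hπ, QuotientGroup.ker_mk'] at h2
          have hzd' : z ^ orderOf (π (z : G)) ∈ A.subgroupOf C := by
            rw [Subgroup.mem_subgroupOf]
            rwa [Subgroup.coe_pow]
          have h3 : (QuotientGroup.mk z : C ⧸ A.subgroupOf C) ^ orderOf (π (z : G)) = 1 := by
            rw [← QuotientGroup.mk_pow]
            exact (QuotientGroup.eq_one_iff _).mpr hzd'
          have h4 : q ∣ orderOf (π (z : G)) := by
            rw [← hz]
            exact orderOf_dvd_of_pow_eq_one h3
          exact hd h4
        have hcop : Nat.Coprime (Nat.card (A.subgroupOf C)) (A.subgroupOf C).index := by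
          rw [hcardA']
          exact hq.coprime_iff_not_dvd.mpr hindex
        obtain ⟨T', hT'⟩ := Subgroup.exists_right_complement'_of_coprime hcop
        have hcardmul : Nat.card (A.subgroupOf C) * Nat.card T' = Nat.card C := hT'.card_mul
        have hcardT' : ¬ q ∣ Nat.card T' := by
          intro hdvd
          have h1 : Nat.card (A.subgroupOf C) * (A.subgroupOf C).index = Nat.card C :=
            Subgroup.card_mul_index _
          have h2 : Nat.card T' = (A.subgroupOf C).index := by
            have hq0 : 0 < Nat.card (A.subgroupOf C) := by rw [hcardA']; exact hq.pos
            exact Nat.eq_of_mul_eq_mul_left hq0 (hcardmul.trans h1.symm)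
          rw [h2] at hdvd
          exact hindex hdvd
        -- elements of A are central in C
        have hacomm : ∀ aEl : C, (aEl : G) ∈ A → ∀ u : C, aEl * u = u * aEl := by
          intro aEl ha u
          apply Subtype.ext
          have hu : (u : G) ∈ Subgroup.centralizer (A : Set G) := (Subgroup.mem_inf.mp u.2).1
          have h1 := Subgroup.mem_centralizer_iff.mp hu _ ha
          rw [Subgroup.coe_mul, Subgroup.coe_mul]
          exact h1
        have hT'n : T'.Normal := by
          constructor
          intro t ht c
          obtain ⟨⟨ac, tc⟩, hact⟩ := (hT'.existsUnique c).exists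
          have hv : tc.1 * t * tc.1⁻¹ ∈ T' := T'.mul_mem (T'.mul_mem tc.2 ht) (T'.inv_mem tc.2)
          have h5 : ac.1 * (tc.1 * t * tc.1⁻¹) * ac.1⁻¹ = tc.1 * t * tc.1⁻¹ := by
            rw [hacomm ac.1 ac.2 (tc.1 * t * tc.1⁻¹)]
            group
          have h6 : c * t * c⁻¹ = tc.1 * t * tc.1⁻¹ := by
            rw [← hact, ← h5]
            group
          rw [h6]
          exact hv
        haveI := hT'n
        have hcardq : Nat.card (C ⧸ T') = q := by
          have h1 : Nat.card C = Nat.card (C ⧸ T') * Nat.card T' :=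
            Subgroup.card_eq_card_quotient_mul_card_subgroup T'
          have h2 : 0 < Nat.card T' := Nat.card_pos
          have h3 : Nat.card (A.subgroupOf C) * Nat.card T' = Nat.card (C ⧸ T') * Nat.card T' :=
            hcardmul.trans h1
          have h4 := Nat.eq_of_mul_eq_mul_right h2 h3
          rw [← h4, hcardA']
        have hqmem : ∀ x : C, ¬ q ∣ orderOf x → x ∈ T' := by
          intro x hx
          have h1 : ((x : C ⧸ T')) ^ orderOf x = 1 := by
            rw [← QuotientGroup.mk_pow, pow_orderOf_eq_one]
            rfl
          have h2 : ((x : C ⧸ T')) ^ q = 1 := by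
            rw [← hcardq]
            exact pow_card_eq_one'
          have h3 : orderOf (x : C ⧸ T') ∣ Nat.gcd (orderOf x) q :=
            Nat.dvd_gcd (orderOf_dvd_of_pow_eq_one h1) (orderOf_dvd_of_pow_eq_one h2)
          have h4 : Nat.gcd (orderOf x) q = 1 := by
            have h5 : Nat.Coprime q (orderOf x) := hq.coprime_iff_not_dvd.mpr hx
            exact Nat.Coprime.gcd_eq_one (Nat.Coprime.symm h5)
          rw [h4, Nat.dvd_one] at h3
          have h6 : (x : C ⧸ T') = 1 := orderOf_eq_one_iff.mp h3
          exact (QuotientGroup.eq_one_iff x).mp h6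
        set T := T'.map C.subtype with hT
        have hTq : ∀ x ∈ T, ¬ q ∣ orderOf x := by
          intro x hxT
          obtain ⟨t0, ht0, rfl⟩ := hxT
          have h1 : orderOf (C.subtype t0) = orderOf t0 := Subgroup.orderOf_coe t0
          rw [h1]
          intro hd
          exact hcardT' (hd.trans (Subgroup.orderOf_dvd_natCard T' ht0))
        have hTn : T.Normal := by
          constructor
          intro t ht g
          obtain ⟨t0, ht0, rfl⟩ := ht
          have h1 : g * (C.subtype t0) * g⁻¹ ∈ C := hCn.conj_mem _ t0.2 g
          set c' : C := ⟨g * (C.subtype t0) * g⁻¹, h1⟩ with hc'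
          have h2 : ¬ q ∣ orderOf c' := by
            have h3 : orderOf (g * (C.subtype t0) * g⁻¹) = orderOf ((C.subtype t0) : G) := by
              have h4 := orderOf_injective (MulAut.conj g).toMonoidHom
                (MulEquiv.injective _) (C.subtype t0)
              simpa [MulAut.conj_apply] using h4
            have h5 : orderOf c' = orderOf t0 := by
              rw [← Subgroup.orderOf_coe c']
              show orderOf (g * (C.subtype t0) * g⁻¹) = orderOf t0
              rw [h3]
              exact Subgroup.orderOf_coe t0
            rw [h5]
            intro hd
            exact hcardT' (hd.trans (Subgroup.orderOf_dvd_natCard T' ht0))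
          have h6 : c' ∈ T' := hqmem c' h2
          exact ⟨c', h6, rfl⟩
        have hTbot : T ≠ ⊥ := by
          intro hbot
          have hT'bot : ∀ t : C, t ∈ T' → t = 1 := by
            intro t ht
            have h1 : C.subtype t ∈ T := ⟨t, ht, rfl⟩
            rw [hbot, Subgroup.mem_bot] at h1
            exact Subtype.ext h1
          obtain ⟨c0, hc0C, hc0A⟩ := SetLike.not_le_iff_exists.mp hCA
          obtain ⟨⟨ac, tc⟩, hact⟩ := (hT'.existsUnique (⟨c0, hc0C⟩ : C)).exists
          have h1 : tc.1 = 1 := hT'bot _ tc.2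
          rw [h1, mul_one] at hact
          have h2 : (ac.1 : C) ∈ A.subgroupOf C := ac.2
          rw [hact] at h2
          exact hc0A (Subgroup.mem_subgroupOf.mp h2)
        exact recurse T hTn hTbot hTq
    · -- r ≠ q : A itself is a nontrivial normal q'-subgroup
      apply recurse A hAn hAbot
      intro x hx hd
      have hor : orderOf x ∣ r := hAc ▸ Subgroup.orderOf_dvd_natCard A hx
      have h1 : q ∣ r := hd.trans hor
      exact hrq ((Nat.prime_dvd_prime_iff_eq hq hr).mp h1).symm

end AuxSS

/-- If `g ∈ F` satisfies `ψ(g) ∈ ψ(H)` for every homomorphism `ψ` from `F` to a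
finite group having a normal `p`-subgroup with quotient abelian of exponent
dividing `p-1` (for every prime `p`), then `φ(g) ∈ φ(H)` for every homomorphism
`φ` from `F` to a finite supersolvable group.  In other words, the
pro-supersolvable closure of `H` equals the intersection of the pro-`H_p`
closures of `H` over all primes `p`. -/
theorem supersolvable_closure_eq_iInter_hp_closure {F : Type u} [Group F]
    (H : Subgroup F) (g : F)
    (h : ∀ p : ℕ, p.Prime → ∀ (S : Type u) [Group S] [Finite S],
      (∃ N : Subgroup S, N.Normal ∧ IsPGroup p N ∧
        (∀ x y : S, ⁅x, y⁆ ∈ N) ∧ (∀ x : S, x ^ (p - 1) ∈ N)) →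
      ∀ ψ : F →* S, ψ g ∈ H.map ψ) :
    ∀ (G : Type u) [Group G] [Finite G], IsSupersolvable G →
      ∀ φ : F →* G, φ g ∈ H.map φ := by
  have main : ∀ (n : ℕ) (G : Type u) [Group G] [Finite G], Nat.card G ≤ n →
      IsSupersolvable G → ∀ φ : F →* G, φ g ∈ H.map φ := by
    intro n
    induction n using Nat.strongRecOn with
    | ind n ih =>
    intro G _ _ hcard hss φ
    rcases subsingleton_or_nontrivial G with hs | hs
    · exact Subgroup.mem_map.mpr ⟨1, H.one_mem, Subsingleton.elim _ _⟩
    · obtain ⟨A, r, hr, hAn, hAc⟩ := exists_prime_order_normal hss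
      haveI := hAn
      have hAbot : A ≠ ⊥ := by
        intro h1
        rw [h1, Subgroup.card_bot] at hAc
        exact hr.one_lt.ne' hAc.symm
      -- Step 1 : induction applied to G ⧸ A
      have hlt : Nat.card (G ⧸ A) < Nat.card G := card_quotient_lt hAbot
      have h1 := ih (Nat.card (G ⧸ A)) (lt_of_lt_of_le hlt hcard) (G ⧸ A) le_rfl
        (ss_map (QuotientGroup.mk' A) (QuotientGroup.mk'_surjective A) hss)
        ((QuotientGroup.mk' A).comp φ)
      rw [← Subgroup.map_map] at h1
      obtain ⟨k1, hk1, hk1e⟩ := Subgroup.mem_map.mp h1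
      obtain ⟨a, haA, hae⟩ := (QuotientGroup.mk'_eq_mk' A).mp hk1e
      -- Step 2 : lemU gives a normal r'-subgroup W with G/W in H_r
      obtain ⟨W, P, hWn, hPn, hWP, hWq, hPW, hPc, hPp⟩ :=
        lemU (Nat.card G) G le_rfl r hr hss
      haveI := hWn
      have hHr : ∃ N : Subgroup (G ⧸ W), N.Normal ∧ IsPGroup r N ∧
          (∀ x y : G ⧸ W, ⁅x, y⁆ ∈ N) ∧ (∀ x : G ⧸ W, x ^ (r - 1) ∈ N) := by
        refine ⟨P.map (QuotientGroup.mk' W),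
          hPn.map _ (QuotientGroup.mk'_surjective W), ?_, ?_, ?_⟩
        · rintro ⟨y, hy⟩
          obtain ⟨x, hxP, rfl⟩ := hy
          obtain ⟨m, hm⟩ := hPW x hxP
          refine ⟨m, ?_⟩
          apply Subtype.ext
          rw [SubmonoidClass.coe_pow]
          show ((QuotientGroup.mk' W) x) ^ r ^ m = 1
          rw [← map_pow]
          exact (QuotientGroup.eq_one_iff _).mpr hm
        · intro x y
          obtain ⟨x0, rfl⟩ := QuotientGroup.mk'_surjective W x
          obtain ⟨y0, rfl⟩ := QuotientGroup.mk'_surjective W y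
          exact ⟨⁅x0, y0⁆, hPc x0 y0, map_commutatorElement _ _ _⟩
        · intro x
          obtain ⟨x0, rfl⟩ := QuotientGroup.mk'_surjective W x
          exact ⟨x0 ^ (r - 1), hPp x0, map_pow _ _ _⟩
      have h2 := h r hr (G ⧸ W) hHr ((QuotientGroup.mk' W).comp φ)
      rw [← Subgroup.map_map] at h2
      obtain ⟨k2, hk2, hk2e⟩ := Subgroup.mem_map.mp h2
      obtain ⟨w, hwW, hwe⟩ := (QuotientGroup.mk'_eq_mk' W).mp hk2e
      -- Step 3 : arithmetic to conclude φ g ∈ φ(H)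
      have hcom : Commute w a := by
        have hcWA : ⁅w, a⁆ ∈ W := by
          have e1 : ⁅w, a⁆ = w * (a * w⁻¹ * a⁻¹) := by group
          rw [e1]
          exact W.mul_mem hwW (hWn.conj_mem _ (W.inv_mem hwW) a)
        have hcA : ⁅w, a⁆ ∈ A := by
          have e1 : ⁅w, a⁆ = (w * a * w⁻¹) * a⁻¹ := by group
          rw [e1]
          exact A.mul_mem (hAn.conj_mem _ haA w) (A.inv_mem haA)
        have hdr : orderOf ⁅w, a⁆ ∣ r := hAc ▸ Subgroup.orderOf_dvd_natCard A hcA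
        have hnd : ¬ r ∣ orderOf ⁅w, a⁆ := hWq _ hcWA
        have hone : orderOf ⁅w, a⁆ = 1 := by
          rcases hr.eq_one_or_self_of_dvd _ hdr with h' | h'
          · exact h'
          · exact absurd (h' ▸ dvd_refl r) hnd
        exact commutatorElement_eq_one_iff_commute.mp (orderOf_eq_one_iff.mp hone)
      have hx : k2⁻¹ * k1 = w * a⁻¹ := by
        have e2 : k1 * a = k2 * w := by rw [hae, hwe]
        have h3 : k1 = k2 * w * a⁻¹ := by rw [← e2]; group
        rw [h3]; group
      set m := orderOf w with hmdef
      have hmr : ¬ r ∣ m := hWq _ hwW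
      have hcop : Nat.Coprime m r := Nat.coprime_comm.mp (hr.coprime_iff_not_dvd.mpr hmr)
      obtain ⟨m', -, hm'⟩ := Nat.exists_mul_mod_eq_one_of_coprime hcop hr.one_lt
      have hxmm : (k2⁻¹ * k1) ^ (m * m') = a⁻¹ := by
        rw [hx, hcom.inv_right.mul_pow, pow_mul w, pow_orderOf_eq_one, one_pow, one_mul]
        have hor : orderOf a ∣ r := hAc ▸ Subgroup.orderOf_dvd_natCard A haA
        have hmod : m * m' ≡ 1 [MOD r] := by
          have h1r : 1 % r = 1 := Nat.mod_eq_of_lt hr.one_lt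
          show m * m' % r = 1 % r
          rw [hm', h1r]
        have hmod2 : m * m' ≡ 1 [MOD orderOf a⁻¹] := by
          rw [orderOf_inv]
          exact hmod.of_dvd hor
        calc (a⁻¹) ^ (m * m') = (a⁻¹) ^ 1 := pow_eq_pow_iff_modEq.mpr hmod2
          _ = a⁻¹ := pow_one _
      have hxK : k2⁻¹ * k1 ∈ H.map φ := (H.map φ).mul_mem ((H.map φ).inv_mem hk2) hk1
      have haK : a ∈ H.map φ := by
        have h4 := (H.map φ).pow_mem hxK (m * m')
        rw [hxmm] at h4
        simpa using (H.map φ).inv_mem h4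
      rw [← hae]
      exact (H.map φ).mul_mem hk1 haK
  intro G _ _ hss φ
  exact main (Nat.card G) G le_rfl hss φ
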